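/- Let α > 1, b > 0 and L > 0 be reals and let x* = (b/(α−1))^(1/α). For all reals k₁, k₂ with 0 < k₁ ≤ k₂ and L/k₁ ≤ x*, it holds that k₁·b + k₁·(L/k₁)^α ≤ k₂·b + k₂·(L/k₂)^α. (For a fixed total load L evenly balanced among k machines, the power k·b + k·(L/k)^α is non-decreasing in k as long as the per-machine load does not exceed x*; hence fewer machines are better when the load per machine stays below x*.) -/

import Mathlib

/-- For α > 1, b > 0, L > 0, x* = (b/(α−1))^(1/α), and reals
0 < k₁ ≤ k₂ with L/k₁ ≤ x*, it holds that
k₁·b + k₁·(L/k₁)^α ≤ k₂·b + k₂·(L/k₂)^α. -/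
theorem stmt7 (α b L : ℝ) (hα : 1 < α) (hb : 0 < b) (hL : 0 < L)
    (k₁ k₂ : ℝ) (hk₁ : 0 < k₁) (hk : k₁ ≤ k₂)
    (hload : L / k₁ ≤ (b / (α - 1)) ^ (1 / α)) :
    k₁ * b + k₁ * (L / k₁) ^ α ≤ k₂ * b + k₂ * (L / k₂) ^ α := by
  have hα1 : 0 < α - 1 := by linarith
  set g : ℝ → ℝ := fun k => k * b + L ^ α * k ^ (1 - α) with hg
  -- rewrite the goal in terms of g
  have hrw : ∀ k : ℝ, 0 < k → k * b + k * (L / k) ^ α = g k := by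
    intro k hk0
    have h1 : (L / k) ^ α = L ^ α / k ^ α := Real.div_rpow hL.le hk0.le α
    have h2 : k ^ (1 - α : ℝ) = k / k ^ α := by
      rw [Real.rpow_sub hk0, Real.rpow_one]
    simp only [hg, h1, h2]
    field_simp
  -- derivative of g
  have hderiv : ∀ k : ℝ, 0 < k →
      HasDerivAt g (b + L ^ α * ((1 - α) * k ^ (1 - α - 1))) k := by
    intro k hk0
    have h1 : HasDerivAt (fun k : ℝ => k * b) b k := by
      simpa using (hasDerivAt_id k).mul_const b
    have h2 : HasDerivAt (fun k : ℝ => k ^ (1 - α : ℝ))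
        ((1 - α) * k ^ (1 - α - 1)) k :=
      Real.hasDerivAt_rpow_const (Or.inl hk0.ne')
    exact h1.add (h2.const_mul (L ^ α))
  -- the derivative is nonneg on [k₁, k₂]
  have hnn : ∀ k : ℝ, k₁ ≤ k → 0 ≤ b + L ^ α * ((1 - α) * k ^ (1 - α - 1)) := by
    intro k hkk
    have hk0 : 0 < k := lt_of_lt_of_le hk₁ hkk
    have hle : L / k ≤ L / k₁ := by
      apply div_le_div_of_nonneg_left hL.le hk₁ hkk
    have hstar : ((b / (α - 1)) ^ (1 / α : ℝ)) ^ α = b / (α - 1) := by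
      rw [one_div]
      exact Real.rpow_inv_rpow (by positivity) (by positivity)
    have hrle : (L / k) ^ α ≤ b / (α - 1) := by
      calc (L / k) ^ α ≤ ((b / (α - 1)) ^ (1 / α : ℝ)) ^ α :=
            Real.rpow_le_rpow (by positivity) (hle.trans hload) (by positivity)
        _ = b / (α - 1) := hstar
    have heq : L ^ α * k ^ (1 - α - 1 : ℝ) = (L / k) ^ α := by
      have : (1 - α - 1 : ℝ) = -α := by ring
      rw [this, Real.rpow_neg hk0.le, Real.div_rpow hL.le hk0.le, div_eq_mul_inv]
    have hb' : (α - 1) * (L / k) ^ α ≤ b := by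
      exact (le_div_iff₀' hα1).mp hrle
    nlinarith [hrle, heq]
  -- monotonicity
  have hmono : MonotoneOn g (Set.Icc k₁ k₂) := by
    apply monotoneOn_of_deriv_nonneg (convex_Icc _ _)
    · intro x hx
      exact (hderiv x (lt_of_lt_of_le hk₁ hx.1)).continuousAt.continuousWithinAt
    · intro x hx
      rw [interior_Icc] at hx
      exact (hderiv x (lt_of_lt_of_le hk₁ hx.1.le)).differentiableAt.differentiableWithinAt
    · intro x hx
      rw [interior_Icc] at hx
      rw [(hderiv x (lt_of_lt_of_le hk₁ hx.1.le)).deriv]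
      exact hnn x hx.1.le
  have := hmono (Set.left_mem_Icc.mpr hk) (Set.right_mem_Icc.mpr hk) hk
  rwa [hrw k₁ hk₁, hrw k₂ (lt_of_lt_of_le hk₁ hk)]
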